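/- Conversion preserves type shape for Π-types, relevant arrows, intersections and unions: (1) if Π x:σ.τ =_Δ ρ then ρ ≡ Π x:σ'.τ' with σ' =_Δ σ and τ' =_Δ τ; (2) if σ →ʳ τ =_Δ ρ then ρ ≡ σ' →ʳ τ' with σ' =_Δ σ and τ' =_Δ τ; (3) if σ ∩ τ =_Δ ρ then ρ ≡ σ' ∩ τ' with σ' =_Δ σ and τ' =_Δ τ; (4) if σ ∪ τ =_Δ ρ then ρ ≡ σ' ∪ τ' with σ' =_Δ σ and τ' =_Δ τ. -/

import Mathlib

set_option autoImplicit false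

namespace LFDelta

/-- Equivalence closure of a relation (conversion). -/
inductive Conv {α : Type} (r : α → α → Prop) : α → α → Prop
| rel {a b : α} : r a b → Conv r a b
| refl (a : α) : Conv r a a
| symm {a b : α} : Conv r a b → Conv r b a
| trans {a b c : α} : Conv r a b → Conv r b c → Conv r a c

/-- Types of the intersection-union type assignment system B
    (with ⊤, used only for the extended system B⁺). -/
inductive BTy : Type
| atom (a : ℕ)
| top
| arr (σ τ : BTy)
| inter (σ τ : BTy)
| union (σ τ : BTy)
deriving DecidableEq

/-- ω-free types of system B. -/
def BTy.OmegaFree : BTy → Prop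
| .atom _ => True
| .top => False
| .arr σ τ => σ.OmegaFree ∧ τ.OmegaFree
| .inter σ τ => σ.OmegaFree ∧ τ.OmegaFree
| .union σ τ => σ.OmegaFree ∧ τ.OmegaFree

/-- Untyped λ-terms (de Bruijn), possibly containing constants
    (the constants c, c_× and c_{|σ|} are used for translations). -/
inductive Lam : Type
| var (n : ℕ)
| app (M N : Lam)
| lam (M : Lam)
| const (c : ℕ)
| cx
| cty (σ : BTy)
deriving DecidableEq

namespace Lam

/-- Pure λ-terms: no constants. -/
def Pure : Lam → Prop
| .var _ => True
| .app M N => Pure M ∧ Pure N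
| .lam M => Pure M
| _ => False

/-- Lift (shift) free variables ≥ c by one. -/
def lift (c : ℕ) : Lam → Lam
| .var n => if n < c then .var n else .var (n+1)
| .app M N => .app (lift c M) (lift c N)
| .lam M => .lam (lift (c+1) M)
| .const k => .const k
| .cx => .cx
| .cty σ => .cty σ

/-- Substitute N for variable k. -/
def subst (k : ℕ) (N : Lam) : Lam → Lam
| .var n => if n < k then .var n else if n = k then (lift 0)^[k] N else .var (n-1)
| .app M₁ M₂ => .app (subst k N M₁) (subst k N M₂)
| .lam M => .lam (subst (k+1) N M)
| .const c => .const c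
| .cx => .cx
| .cty σ => .cty σ

/-- One-step β-reduction. -/
inductive StepB : Lam → Lam → Prop
| beta {M N : Lam} : StepB (.app (.lam M) N) (subst 0 N M)
| appL {M M' N : Lam} : StepB M M' → StepB (.app M N) (.app M' N)
| appR {M N N' : Lam} : StepB N N' → StepB (.app M N) (.app M N')
| lam {M M' : Lam} : StepB M M' → StepB (.lam M) (.lam M')

/-- One-step η-reduction. -/
inductive StepE : Lam → Lam → Prop
| eta {M : Lam} : StepE (.lam (.app (lift 0 M) (.var 0))) M
| appL {M M' N : Lam} : StepE M M' → StepE (.app M N) (.app M' N)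
| appR {M N N' : Lam} : StepE N N' → StepE (.app M N) (.app M N')
| lam {M M' : Lam} : StepE M M' → StepE (.lam M) (.lam M')

/-- β-convertibility. -/
def BetaEq : Lam → Lam → Prop := Conv StepB

/-- βη-convertibility. -/
def BetaEtaEq : Lam → Lam → Prop := Conv (fun a b => StepB a b ∨ StepE a b)

/-- Strong β-normalization. -/
def SNBeta (M : Lam) : Prop := Acc (fun a b => StepB b a) M

end Lam

/-- The subtype theory Ξ of system B without the ω-axioms (5) and (13),
    i.e. axioms/rules (1)-(4), (6)-(12), (14). -/
inductive SubB : BTy → BTy → Prop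
| idemInter {σ : BTy} : SubB σ (.inter σ σ)                                  -- (1)
| idemUnion {σ : BTy} : SubB (.union σ σ) σ                                  -- (2)
| interL {σ τ : BTy} : SubB (.inter σ τ) σ                                   -- (3)
| interR {σ τ : BTy} : SubB (.inter σ τ) τ                                   -- (3)
| unionL {σ τ : BTy} : SubB σ (.union σ τ)                                   -- (4)
| unionR {σ τ : BTy} : SubB τ (.union σ τ)                                   -- (4)
| refl {σ : BTy} : SubB σ σ                                                  -- (6)
| monoInter {σ₁ σ₂ τ₁ τ₂ : BTy} :
    SubB σ₁ σ₂ → SubB τ₁ τ₂ → SubB (.inter σ₁ τ₁) (.inter σ₂ τ₂)             -- (7)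
| monoUnion {σ₁ σ₂ τ₁ τ₂ : BTy} :
    SubB σ₁ σ₂ → SubB τ₁ τ₂ → SubB (.union σ₁ τ₁) (.union σ₂ τ₂)             -- (8)
| trans {σ τ ρ : BTy} : SubB σ τ → SubB τ ρ → SubB σ ρ                        -- (9)
| dist {σ τ ρ : BTy} :
    SubB (.inter σ (.union τ ρ)) (.union (.inter σ τ) (.inter σ ρ))          -- (10)
| arrInter {σ τ ρ : BTy} :
    SubB (.inter (.arr σ τ) (.arr σ ρ)) (.arr σ (.inter τ ρ))                -- (11)
| arrUnion {σ τ ρ : BTy} :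
    SubB (.inter (.arr σ ρ) (.arr τ ρ)) (.arr (.union σ τ) ρ)                -- (12)
| arrow {σ₁ σ₂ τ₁ τ₂ : BTy} :
    SubB σ₂ σ₁ → SubB τ₁ τ₂ → SubB (.arr σ₁ τ₁) (.arr σ₂ τ₂)                  -- (14)

/-- The subtype theory Ξ' (Ξ without (5), (10), (13)), parametrized by
    additional axioms `ax`. -/
inductive Xi' (ax : BTy → BTy → Prop) : BTy → BTy → Prop
| ax {σ τ : BTy} : ax σ τ → Xi' ax σ τ
| idemInter {σ : BTy} : Xi' ax σ (.inter σ σ)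
| idemUnion {σ : BTy} : Xi' ax (.union σ σ) σ
| interL {σ τ : BTy} : Xi' ax (.inter σ τ) σ
| interR {σ τ : BTy} : Xi' ax (.inter σ τ) τ
| unionL {σ τ : BTy} : Xi' ax σ (.union σ τ)
| unionR {σ τ : BTy} : Xi' ax τ (.union σ τ)
| refl {σ : BTy} : Xi' ax σ σ
| monoInter {σ₁ σ₂ τ₁ τ₂ : BTy} :
    Xi' ax σ₁ σ₂ → Xi' ax τ₁ τ₂ → Xi' ax (.inter σ₁ τ₁) (.inter σ₂ τ₂)
| monoUnion {σ₁ σ₂ τ₁ τ₂ : BTy} :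
    Xi' ax σ₁ σ₂ → Xi' ax τ₁ τ₂ → Xi' ax (.union σ₁ τ₁) (.union σ₂ τ₂)
| trans {σ τ ρ : BTy} : Xi' ax σ τ → Xi' ax τ ρ → Xi' ax σ ρ
| arrInter {σ τ ρ : BTy} :
    Xi' ax (.inter (.arr σ τ) (.arr σ ρ)) (.arr σ (.inter τ ρ))
| arrUnion {σ τ ρ : BTy} :
    Xi' ax (.inter (.arr σ ρ) (.arr τ ρ)) (.arr (.union σ τ) ρ)
| arrow {σ₁ σ₂ τ₁ τ₂ : BTy} :
    Xi' ax σ₂ σ₁ → Xi' ax τ₁ τ₂ → Xi' ax (.arr σ₁ τ₁) (.arr σ₂ τ₂)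

/-- Type assignment of system B (Curry style), extended with constant
    typing axioms `ξ` and the constants c_× and c_{|σ|} of B⁺.
    With `ξ := fun _ _ => False` and on pure terms this is exactly system B
    without ω. -/
inductive BPlus (ξ : ℕ → BTy → Prop) : List BTy → Lam → BTy → Prop
| var {Γ : List BTy} {n : ℕ} {σ : BTy} :
    Γ[n]? = some σ → BPlus ξ Γ (.var n) σ
| const {Γ : List BTy} {c : ℕ} {σ : BTy} : ξ c σ → BPlus ξ Γ (.const c) σ
| cx {Γ : List BTy} : BPlus ξ Γ .cx (.arr .top (.arr .top .top))
| cty {Γ : List BTy} {σ : BTy} :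
    BPlus ξ Γ (.cty σ) (.arr .top (.arr (.arr σ .top) .top))
| abs {Γ : List BTy} {M : Lam} {σ τ : BTy} :
    BPlus ξ (σ :: Γ) M τ → BPlus ξ Γ (.lam M) (.arr σ τ)
| app {Γ : List BTy} {M N : Lam} {σ τ : BTy} :
    BPlus ξ Γ M (.arr σ τ) → BPlus ξ Γ N σ → BPlus ξ Γ (.app M N) τ
| interI {Γ : List BTy} {M : Lam} {σ τ : BTy} :
    BPlus ξ Γ M σ → BPlus ξ Γ M τ → BPlus ξ Γ M (.inter σ τ)
| interEl {Γ : List BTy} {M : Lam} {σ τ : BTy} :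
    BPlus ξ Γ M (.inter σ τ) → BPlus ξ Γ M σ
| interEr {Γ : List BTy} {M : Lam} {σ τ : BTy} :
    BPlus ξ Γ M (.inter σ τ) → BPlus ξ Γ M τ
| unionIl {Γ : List BTy} {M : Lam} {σ τ : BTy} :
    BPlus ξ Γ M σ → BPlus ξ Γ M (.union σ τ)
| unionIr {Γ : List BTy} {M : Lam} {σ τ : BTy} :
    BPlus ξ Γ M τ → BPlus ξ Γ M (.union σ τ)
| unionE {Γ : List BTy} {M N : Lam} {σ τ ρ : BTy} :
    BPlus ξ (σ :: Γ) M ρ → BPlus ξ (τ :: Γ) M ρ → BPlus ξ Γ N (.union σ τ) →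
    BPlus ξ Γ (Lam.subst 0 N M) ρ
| sub {Γ : List BTy} {M : Lam} {σ τ : BTy} :
    BPlus ξ Γ M σ → SubB σ τ → BPlus ξ Γ M τ

/-- The pseudo-terms of LF_Δ: kinds, families and objects in a single syntax
    (the typing judgments single out each syntactic class). -/
inductive Tm : Type
| type                        -- the kind Type
| pi (σ τ : Tm)               -- Πx:σ.K and Πx:σ.τ
| rarr (σ τ : Tm)             -- relevant family σ →ʳ τ
| inter (σ τ : Tm)            -- intersection family
| union (σ τ : Tm)            -- union family
| const (c : ℕ)               -- constants (family- and object-level)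
| var (n : ℕ)                 -- variables (de Bruijn)
| lam (σ Δ : Tm)              -- λx:σ.Δ
| app (Δ₁ Δ₂ : Tm)            -- application (of families and of objects)
| rlam (σ Δ : Tm)             -- relevant abstraction λʳx:σ.Δ
| rapp (Δ₁ Δ₂ : Tm)           -- relevant application
| pair (Δ₁ Δ₂ : Tm)           -- strong pair ⟨Δ₁,Δ₂⟩
| copair (Δ₁ Δ₂ : Tm)         -- strong co-pair [Δ₁,Δ₂]
| prl (Δ : Tm)                -- left projection
| prr (Δ : Tm)                -- right projection
| inl (σ Δ : Tm)              -- injection in_l^σ Δ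
| inr (σ Δ : Tm)              -- injection in_r^σ Δ
deriving DecidableEq

namespace Tm

/-- Lift free variables ≥ c by one. -/
def lift (c : ℕ) : Tm → Tm
| .type => .type
| .pi σ τ => .pi (lift c σ) (lift (c+1) τ)
| .rarr σ τ => .rarr (lift c σ) (lift c τ)
| .inter σ τ => .inter (lift c σ) (lift c τ)
| .union σ τ => .union (lift c σ) (lift c τ)
| .const k => .const k
| .var n => if n < c then .var n else .var (n+1)
| .lam σ Δ => .lam (lift c σ) (lift (c+1) Δ)
| .app Δ₁ Δ₂ => .app (lift c Δ₁) (lift c Δ₂)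
| .rlam σ Δ => .rlam (lift c σ) (lift (c+1) Δ)
| .rapp Δ₁ Δ₂ => .rapp (lift c Δ₁) (lift c Δ₂)
| .pair Δ₁ Δ₂ => .pair (lift c Δ₁) (lift c Δ₂)
| .copair Δ₁ Δ₂ => .copair (lift c Δ₁) (lift c Δ₂)
| .prl Δ => .prl (lift c Δ)
| .prr Δ => .prr (lift c Δ)
| .inl σ Δ => .inl (lift c σ) (lift c Δ)
| .inr σ Δ => .inr (lift c σ) (lift c Δ)

/-- Substitute the object N for variable k. -/
def subst (k : ℕ) (N : Tm) : Tm → Tm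
| .type => .type
| .pi σ τ => .pi (subst k N σ) (subst (k+1) N τ)
| .rarr σ τ => .rarr (subst k N σ) (subst k N τ)
| .inter σ τ => .inter (subst k N σ) (subst k N τ)
| .union σ τ => .union (subst k N σ) (subst k N τ)
| .const c => .const c
| .var n => if n < k then .var n else if n = k then (lift 0)^[k] N else .var (n-1)
| .lam σ Δ => .lam (subst k N σ) (subst (k+1) N Δ)
| .app Δ₁ Δ₂ => .app (subst k N Δ₁) (subst k N Δ₂)
| .rlam σ Δ => .rlam (subst k N σ) (subst (k+1) N Δ)
| .rapp Δ₁ Δ₂ => .rapp (subst k N Δ₁) (subst k N Δ₂)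
| .pair Δ₁ Δ₂ => .pair (subst k N Δ₁) (subst k N Δ₂)
| .copair Δ₁ Δ₂ => .copair (subst k N Δ₁) (subst k N Δ₂)
| .prl Δ => .prl (subst k N Δ)
| .prr Δ => .prr (subst k N Δ)
| .inl σ Δ => .inl (subst k N σ) (subst k N Δ)
| .inr σ Δ => .inr (subst k N σ) (subst k N Δ)

end Tm

/-- The essence function: compositionally erases all type annotations and
    proof-functional constructs (on non-objects it returns a dummy value). -/
def essence : Tm → Lam
| .var n => .var n
| .const c => .const c
| .lam _ Δ => .lam (essence Δ)
| .rlam _ Δ => .lam (essence Δ)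
| .app Δ₁ Δ₂ => .app (essence Δ₁) (essence Δ₂)
| .rapp _ Δ₂ => essence Δ₂
| .pair Δ₁ _ => essence Δ₁
| .copair Δ₁ _ => essence Δ₁
| .prl Δ => essence Δ
| .prr Δ => essence Δ
| .inl _ Δ => essence Δ
| .inr _ Δ => essence Δ
| .type => .const 0
| .pi _ _ => .const 0
| .rarr _ _ => .const 0
| .inter _ _ => .const 0
| .union _ _ => .const 0

/-- One-step reduction →_Δ of LF_Δ. Congruence rules are standard, except
    that the components of strong pairs and co-pairs must reduce in parallel,
    keeping identical essences. -/
inductive Step : Tm → Tm → Prop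
| beta {σ Δ₁ Δ₂ : Tm} : Step (.app (.lam σ Δ₁) Δ₂) (Tm.subst 0 Δ₂ Δ₁)
| rbeta {σ Δ₁ Δ₂ : Tm} : Step (.rapp (.rlam σ Δ₁) Δ₂) (Tm.subst 0 Δ₂ Δ₁)
| prl {Δ₁ Δ₂ : Tm} : Step (.prl (.pair Δ₁ Δ₂)) Δ₁
| prr {Δ₁ Δ₂ : Tm} : Step (.prr (.pair Δ₁ Δ₂)) Δ₂
| coInl {Δ₁ Δ₂ σ Δ₃ : Tm} :
    Step (.app (.copair Δ₁ Δ₂) (.inl σ Δ₃)) (.app Δ₁ Δ₃)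
| coInr {Δ₁ Δ₂ σ Δ₃ : Tm} :
    Step (.app (.copair Δ₁ Δ₂) (.inr σ Δ₃)) (.app Δ₂ Δ₃)
| piL {σ σ' τ : Tm} : Step σ σ' → Step (.pi σ τ) (.pi σ' τ)
| piR {σ τ τ' : Tm} : Step τ τ' → Step (.pi σ τ) (.pi σ τ')
| rarrL {σ σ' τ : Tm} : Step σ σ' → Step (.rarr σ τ) (.rarr σ' τ)
| rarrR {σ τ τ' : Tm} : Step τ τ' → Step (.rarr σ τ) (.rarr σ τ')
| interL {σ σ' τ : Tm} : Step σ σ' → Step (.inter σ τ) (.inter σ' τ)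
| interR {σ τ τ' : Tm} : Step τ τ' → Step (.inter σ τ) (.inter σ τ')
| unionL {σ σ' τ : Tm} : Step σ σ' → Step (.union σ τ) (.union σ' τ)
| unionR {σ τ τ' : Tm} : Step τ τ' → Step (.union σ τ) (.union σ τ')
| lamL {σ σ' Δ : Tm} : Step σ σ' → Step (.lam σ Δ) (.lam σ' Δ)
| lamR {σ Δ Δ' : Tm} : Step Δ Δ' → Step (.lam σ Δ) (.lam σ Δ')
| rlamL {σ σ' Δ : Tm} : Step σ σ' → Step (.rlam σ Δ) (.rlam σ' Δ)
| rlamR {σ Δ Δ' : Tm} : Step Δ Δ' → Step (.rlam σ Δ) (.rlam σ Δ')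
| appL {Δ₁ Δ₁' Δ₂ : Tm} : Step Δ₁ Δ₁' → Step (.app Δ₁ Δ₂) (.app Δ₁' Δ₂)
| appR {Δ₁ Δ₂ Δ₂' : Tm} : Step Δ₂ Δ₂' → Step (.app Δ₁ Δ₂) (.app Δ₁ Δ₂')
| rappL {Δ₁ Δ₁' Δ₂ : Tm} : Step Δ₁ Δ₁' → Step (.rapp Δ₁ Δ₂) (.rapp Δ₁' Δ₂)
| rappR {Δ₁ Δ₂ Δ₂' : Tm} : Step Δ₂ Δ₂' → Step (.rapp Δ₁ Δ₂) (.rapp Δ₁ Δ₂')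
| prlC {Δ Δ' : Tm} : Step Δ Δ' → Step (.prl Δ) (.prl Δ')
| prrC {Δ Δ' : Tm} : Step Δ Δ' → Step (.prr Δ) (.prr Δ')
| inlL {σ σ' Δ : Tm} : Step σ σ' → Step (.inl σ Δ) (.inl σ' Δ)
| inlR {σ Δ Δ' : Tm} : Step Δ Δ' → Step (.inl σ Δ) (.inl σ Δ')
| inrL {σ σ' Δ : Tm} : Step σ σ' → Step (.inr σ Δ) (.inr σ' Δ)
| inrR {σ Δ Δ' : Tm} : Step Δ Δ' → Step (.inr σ Δ) (.inr σ Δ')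
| pairC {Δ₁ Δ₁' Δ₂ Δ₂' : Tm} :
    Step Δ₁ Δ₁' → Step Δ₂ Δ₂' → essence Δ₁' = essence Δ₂' →
    Step (.pair Δ₁ Δ₂) (.pair Δ₁' Δ₂')
| copairC {Δ₁ Δ₁' Δ₂ Δ₂' : Tm} :
    Step Δ₁ Δ₁' → Step Δ₂ Δ₂' → essence Δ₁' = essence Δ₂' →
    Step (.copair Δ₁ Δ₂) (.copair Δ₁' Δ₂')

/-- Definitional equality =_Δ : the symmetric reflexive transitive closure
    of →_Δ. -/
def DefEq : Tm → Tm → Prop := Conv Step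

/-- Strong normalization w.r.t. →_Δ. -/
def SNTm (t : Tm) : Prop := Acc (fun a b => Step b a) t

/-- Signature entries: kind declarations a:K and type declarations c:σ. -/
inductive SigEntry : Type
| kd (a : ℕ) (K : Tm)
| ty (c : ℕ) (σ : Tm)
deriving DecidableEq

abbrev Sig := List SigEntry
abbrev Ctx := List Tm

/-- c is declared in the signature. -/
def inDom (S : Sig) (c : ℕ) : Prop :=
  (∃ K, SigEntry.kd c K ∈ S) ∨ (∃ σ, SigEntry.ty c σ ∈ S)

/-- Context lookup, with the appropriate lifting. -/
inductive VarTy : Ctx → ℕ → Tm → Prop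
| zero {Γ : Ctx} {σ : Tm} : VarTy (σ :: Γ) 0 (Tm.lift 0 σ)
| succ {Γ : Ctx} {n : ℕ} {σ τ : Tm} :
    VarTy Γ n σ → VarTy (τ :: Γ) (n+1) (Tm.lift 0 σ)

mutual
/-- Σ is a valid signature. -/
inductive SigOk : Sig → Prop
| nil : SigOk []
| kd {S : Sig} {a : ℕ} {K : Tm} :
    SigOk S → KindOk S [] K → ¬ inDom S a → SigOk (.kd a K :: S)
| ty {S : Sig} {c : ℕ} {σ : Tm} :
    SigOk S → FamTy S [] σ .type → ¬ inDom S c → SigOk (.ty c σ :: S)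

/-- Γ is a valid context in Σ. -/
inductive CtxOk : Sig → Ctx → Prop
| nil {S : Sig} : SigOk S → CtxOk S []
| cons {S : Sig} {Γ : Ctx} {σ : Tm} :
    CtxOk S Γ → FamTy S Γ σ .type → CtxOk S (σ :: Γ)

/-- K is a kind in Γ and Σ. -/
inductive KindOk : Sig → Ctx → Tm → Prop
| type {S : Sig} {Γ : Ctx} : CtxOk S Γ → KindOk S Γ .type
| pi {S : Sig} {Γ : Ctx} {σ K : Tm} :
    FamTy S Γ σ .type → KindOk S (σ :: Γ) K → KindOk S Γ (.pi σ K)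

/-- σ has kind K in Γ and Σ. -/
inductive FamTy : Sig → Ctx → Tm → Tm → Prop
| const {S : Sig} {Γ : Ctx} {a : ℕ} {K : Tm} :
    CtxOk S Γ → SigEntry.kd a K ∈ S → FamTy S Γ (.const a) K
| pi {S : Sig} {Γ : Ctx} {σ τ : Tm} :
    FamTy S Γ σ .type → FamTy S (σ :: Γ) τ .type → FamTy S Γ (.pi σ τ) .type
| app {S : Sig} {Γ : Ctx} {σ τ K Δ : Tm} :
    FamTy S Γ σ (.pi τ K) → ObjTy S Γ Δ τ →
    FamTy S Γ (.app σ Δ) (Tm.subst 0 Δ K)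
| rarr {S : Sig} {Γ : Ctx} {σ τ : Tm} :
    FamTy S Γ σ .type → FamTy S Γ τ .type → FamTy S Γ (.rarr σ τ) .type
| inter {S : Sig} {Γ : Ctx} {σ τ : Tm} :
    FamTy S Γ σ .type → FamTy S Γ τ .type → FamTy S Γ (.inter σ τ) .type
| union {S : Sig} {Γ : Ctx} {σ τ : Tm} :
    FamTy S Γ σ .type → FamTy S Γ τ .type → FamTy S Γ (.union σ τ) .type
| conv {S : Sig} {Γ : Ctx} {σ K₁ K₂ : Tm} :
    FamTy S Γ σ K₁ → KindOk S Γ K₂ → DefEq K₁ K₂ → FamTy S Γ σ K₂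

/-- Δ has type σ in Γ and Σ. -/
inductive ObjTy : Sig → Ctx → Tm → Tm → Prop
| const {S : Sig} {Γ : Ctx} {c : ℕ} {σ : Tm} :
    CtxOk S Γ → SigEntry.ty c σ ∈ S → ObjTy S Γ (.const c) σ
| var {S : Sig} {Γ : Ctx} {n : ℕ} {σ : Tm} :
    CtxOk S Γ → VarTy Γ n σ → ObjTy S Γ (.var n) σ
| lam {S : Sig} {Γ : Ctx} {σ τ Δ : Tm} :
    ObjTy S (σ :: Γ) Δ τ → ObjTy S Γ (.lam σ Δ) (.pi σ τ)
| app {S : Sig} {Γ : Ctx} {σ τ Δ₁ Δ₂ : Tm} :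
    ObjTy S Γ Δ₁ (.pi σ τ) → ObjTy S Γ Δ₂ σ →
    ObjTy S Γ (.app Δ₁ Δ₂) (Tm.subst 0 Δ₂ τ)
| rlam {S : Sig} {Γ : Ctx} {σ τ Δ : Tm} :
    ObjTy S (σ :: Γ) Δ (Tm.lift 0 τ) →
    Lam.BetaEtaEq (essence Δ) (.var 0) →
    ObjTy S Γ (.rlam σ Δ) (.rarr σ τ)
| rapp {S : Sig} {Γ : Ctx} {σ τ Δ₁ Δ₂ : Tm} :
    ObjTy S Γ Δ₁ (.rarr σ τ) → ObjTy S Γ Δ₂ σ → ObjTy S Γ (.rapp Δ₁ Δ₂) τ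
| pair {S : Sig} {Γ : Ctx} {σ τ Δ₁ Δ₂ : Tm} :
    ObjTy S Γ Δ₁ σ → ObjTy S Γ Δ₂ τ →
    Lam.BetaEtaEq (essence Δ₁) (essence Δ₂) →
    ObjTy S Γ (.pair Δ₁ Δ₂) (.inter σ τ)
| prl {S : Sig} {Γ : Ctx} {σ τ Δ : Tm} :
    ObjTy S Γ Δ (.inter σ τ) → ObjTy S Γ (.prl Δ) σ
| prr {S : Sig} {Γ : Ctx} {σ τ Δ : Tm} :
    ObjTy S Γ Δ (.inter σ τ) → ObjTy S Γ (.prr Δ) τ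
| inl {S : Sig} {Γ : Ctx} {σ τ Δ : Tm} :
    ObjTy S Γ Δ σ → FamTy S Γ (.union σ τ) .type →
    ObjTy S Γ (.inl τ Δ) (.union σ τ)
| inr {S : Sig} {Γ : Ctx} {σ τ Δ : Tm} :
    ObjTy S Γ Δ τ → FamTy S Γ (.union σ τ) .type →
    ObjTy S Γ (.inr σ Δ) (.union σ τ)
| copair {S : Sig} {Γ : Ctx} {σ τ ρ Δ₁ Δ₂ : Tm} :
    ObjTy S Γ Δ₁
      (.pi σ (Tm.subst 0 (.inl (Tm.lift 0 τ) (.var 0)) (Tm.lift 1 ρ))) →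
    ObjTy S Γ Δ₂
      (.pi τ (Tm.subst 0 (.inr (Tm.lift 0 σ) (.var 0)) (Tm.lift 1 ρ))) →
    FamTy S (.union σ τ :: Γ) ρ .type →
    Lam.BetaEtaEq (essence Δ₁) (essence Δ₂) →
    ObjTy S Γ (.copair Δ₁ Δ₂) (.pi (.union σ τ) ρ)
| conv {S : Sig} {Γ : Ctx} {σ τ Δ : Tm} :
    ObjTy S Γ Δ σ → FamTy S Γ τ .type → DefEq σ τ → ObjTy S Γ Δ τ
end

/-- The dependency-erasing translation |·| on families and kinds. -/
def eraseTy : Tm → BTy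
| .type => .top
| .pi σ τ => .arr (eraseTy σ) (eraseTy τ)
| .rarr σ τ => .arr (eraseTy σ) (eraseTy τ)
| .inter σ τ => .inter (eraseTy σ) (eraseTy τ)
| .union σ τ => .union (eraseTy σ) (eraseTy τ)
| .const a => .atom a
| .app σ _ => eraseTy σ
| _ => .top

/-- The forgetful translation ‖·‖ of LF_Δ objects and families into pure
    λ-terms with constants, flattening type annotations into redexes. -/
def tr : Tm → Lam
| .type => .const 0
| .pi σ τ => .app (.app (.cty (eraseTy σ)) (tr σ)) (.lam (tr τ))
| .rarr σ τ => .app (.app .cx (tr σ)) (tr τ)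
| .inter σ τ => .app (.app .cx (tr σ)) (tr τ)
| .union σ τ => .app (.app .cx (tr σ)) (tr τ)
| .const c => .const c
| .var n => .var n
| .lam σ Δ => .app (.lam (.lam (Lam.lift 1 (tr Δ)))) (tr σ)
| .rlam σ Δ => .app (.lam (.lam (Lam.lift 1 (tr Δ)))) (tr σ)
| .app Δ₁ Δ₂ => .app (tr Δ₁) (tr Δ₂)
| .rapp Δ₁ Δ₂ => .app (tr Δ₁) (tr Δ₂)
| .pair Δ₁ _ => tr Δ₁
| .copair Δ₁ _ => tr Δ₁
| .prl Δ => tr Δ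
| .prr Δ => tr Δ
| .inl σ Δ => .app (.lam (Lam.lift 0 (tr Δ))) (tr σ)
| .inr σ Δ => .app (.lam (Lam.lift 0 (tr Δ))) (tr σ)

/-- Constant typing axioms of B⁺ induced by a signature. -/
def sigXi (S : Sig) : ℕ → BTy → Prop :=
  fun c τ => (∃ σ, SigEntry.ty c σ ∈ S ∧ τ = eraseTy σ) ∨
             (∃ K, SigEntry.kd c K ∈ S ∧ τ = eraseTy K)

/-- Embedding of (non-dependent, relevance-free) B types as LF_Δ families. -/
def toFam : BTy → Tm
| .atom a => .const a
| .top => .const 0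
| .arr σ τ => .pi (toFam σ) (Tm.lift 0 (toFam τ))
| .inter σ τ => .inter (toFam σ) (toFam τ)
| .union σ τ => .union (toFam σ) (toFam τ)



set_option maxHeartbeats 1000000

section Machinery
namespace Tm

theorem lift_lift : ∀ (t : Tm) (c d : ℕ), c ≤ d →
    lift c (lift d t) = lift (d+1) (lift c t) := by
  intro t
  induction t <;> intro c d h <;> simp only [lift]
  case var n =>
    split_ifs <;> simp only [lift] <;> split_ifs <;>
      first | rfl | (exact congrArg Tm.var (by omega)) | (exfalso; omega)
  all_goals
    congr 1 <;> solve_by_elim [Nat.succ_le_succ]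

theorem lift_iter_small {N : Tm} : ∀ (k c : ℕ), c ≤ k →
    lift c ((lift 0)^[k] N) = (lift 0)^[k+1] N := by
  intro k
  induction k with
  | zero =>
    intro c h
    have : c = 0 := by omega
    subst this
    simp
  | succ k ih =>
    intro c h
    rcases Nat.eq_zero_or_pos c with rfl | hc
    · rw [← Function.iterate_succ_apply' (lift 0) (k+1) N]
    · rw [Function.iterate_succ_apply' (lift 0) k N]
      have h1 : (0:ℕ) ≤ c - 1 := by omega
      have := lift_lift ((lift 0)^[k] N) 0 (c-1) h1
      have hc1 : c - 1 + 1 = c := by omega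
      rw [hc1] at this
      rw [← this, ih (c-1) (by omega), Function.iterate_succ_apply' (lift 0) (k+1) N]

theorem lift_iter_add {N : Tm} : ∀ (k c : ℕ),
    lift (k+c) ((lift 0)^[k] N) = (lift 0)^[k] (lift c N) := by
  intro k
  induction k with
  | zero => intro c; simp
  | succ k ih =>
    intro c
    rw [Function.iterate_succ_apply' (lift 0) k N,
        Function.iterate_succ_apply' (lift 0) k (lift c N), ← ih c]
    have := lift_lift ((lift 0)^[k] N) 0 (k+c) (by omega)
    have e : k + 1 + c = k + c + 1 := by omega
    rw [e, ← this]

theorem subst_lift_self (P : Tm) : ∀ (t : Tm) (c : ℕ), subst c P (lift c t) = t := by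
  intro t
  induction t <;> intro c <;> simp only [lift, subst]
  case var n =>
    split_ifs <;> simp only [subst] <;> split_ifs <;>
      first | rfl | (exact congrArg Tm.var (by omega)) | (exfalso; omega)
  all_goals congr 1 <;> solve_by_elim

theorem lift_subst {N : Tm} : ∀ (t : Tm) (c k : ℕ), c ≤ k →
    lift c (subst k N t) = subst (k+1) N (lift c t) := by
  intro t
  induction t <;> intro c k h <;> simp only [lift, subst]
  case var n =>
    split_ifs <;> simp only [subst, lift] <;> split_ifs <;>
      first
        | rfl
        | (exact congrArg Tm.var (by omega))
        | (exfalso; omega)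
        | (exact lift_iter_small k c h)
  all_goals congr 1 <;> solve_by_elim [Nat.succ_le_succ]

theorem lift_subst_add {N : Tm} : ∀ (t : Tm) (k c : ℕ),
    lift (k+c) (subst k N t) = subst k (lift c N) (lift (k+c+1) t) := by
  intro t
  induction t <;> intro k c <;> simp only [lift, subst]
  case var n =>
    split_ifs <;> simp only [subst, lift] <;> split_ifs <;>
      first
        | rfl
        | (exact congrArg Tm.var (by omega))
        | (exfalso; omega)
        | (exact lift_iter_add k c)
  all_goals
    try { congr 1 <;> solve_by_elim }
  all_goals
    rename_i a b iha ihb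
    congr 1
    · exact iha k c
    · have := ihb (k+1) c
      rw [show k + 1 + c = k + c + 1 from by omega] at this
      exact this


theorem subst_iter {N M : Tm} : ∀ (j k : ℕ),
    subst (k+j) N ((lift 0)^[j] M) = (lift 0)^[j] (subst k N M) := by
  intro j
  induction j with
  | zero => intro k; simp
  | succ j ih =>
    intro k
    rw [Function.iterate_succ_apply' (lift 0) j M,
        Function.iterate_succ_apply' (lift 0) j (subst k N M), ← ih k,
        show k+(j+1) = k+j+1 from by omega,
        ← lift_subst ((lift 0)^[j] M) 0 (k+j) (by omega)]

theorem subst_iter_gt {P N : Tm} : ∀ (j i : ℕ), j ≤ i →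
    subst j P ((lift 0)^[i+1] N) = (lift 0)^[i] N := by
  intro j
  induction j with
  | zero =>
    intro i _
    rw [Function.iterate_succ_apply' (lift 0) i N, subst_lift_self]
  | succ j ih =>
    intro i h
    obtain ⟨i', rfl⟩ : ∃ i', i = i' + 1 := ⟨i - 1, by omega⟩
    rw [Function.iterate_succ_apply' (lift 0) (i'+1) N,
        ← lift_subst ((lift 0)^[i'+1] N) 0 j (by omega),
        ih i' (by omega), ← Function.iterate_succ_apply' (lift 0) i' N]

theorem subst_subst {N M : Tm} : ∀ (t : Tm) (j k : ℕ),
    subst (k+j) N (subst j M t) = subst j (subst k N M) (subst (k+j+1) N t) := by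
  intro t
  induction t <;> intro j k <;> simp only [subst]
  case var n =>
    split_ifs <;> (try simp only [subst]) <;> (try split_ifs) <;>
      first
        | rfl
        | (exact congrArg Tm.var (by omega))
        | (exfalso; omega)
        | (exact subst_iter j k)
        | (exact (subst_iter_gt j (k+j) (by omega)).symm)
  all_goals try { congr 1 <;> solve_by_elim }
  all_goals
    rename_i a b iha ihb
    congr 1
    · exact iha j k
    · have := ihb (j+1) k
      rw [show k + (j + 1) = k + j + 1 from by omega] at this
      exact this


end Tm

theorem Tm.lift_subst0 (t N : Tm) (c : ℕ) :
    Tm.lift c (Tm.subst 0 N t) = Tm.subst 0 (Tm.lift c N) (Tm.lift (c+1) t) := by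
  simpa using Tm.lift_subst_add t 0 c

theorem Tm.subst_subst0 (t M N : Tm) (k : ℕ) :
    Tm.subst k N (Tm.subst 0 M t) = Tm.subst 0 (Tm.subst k N M) (Tm.subst (k+1) N t) := by
  simpa using Tm.subst_subst t 0 k

/-- Parallel reduction on LF_Δ pseudo-terms (without essence side conditions). -/
inductive Par : Tm → Tm → Prop
| ptype : Par .type .type
| pconst (c : ℕ) : Par (.const c) (.const c)
| pvar (n : ℕ) : Par (.var n) (.var n)
| ppi {a a' b b'} : Par a a' → Par b b' → Par (.pi a b) (.pi a' b')
| prarr {a a' b b'} : Par a a' → Par b b' → Par (.rarr a b) (.rarr a' b')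
| pinter {a a' b b'} : Par a a' → Par b b' → Par (.inter a b) (.inter a' b')
| punion {a a' b b'} : Par a a' → Par b b' → Par (.union a b) (.union a' b')
| plam {a a' b b'} : Par a a' → Par b b' → Par (.lam a b) (.lam a' b')
| prlam {a a' b b'} : Par a a' → Par b b' → Par (.rlam a b) (.rlam a' b')
| papp {a a' b b'} : Par a a' → Par b b' → Par (.app a b) (.app a' b')
| prapp {a a' b b'} : Par a a' → Par b b' → Par (.rapp a b) (.rapp a' b')
| ppair {a a' b b'} : Par a a' → Par b b' → Par (.pair a b) (.pair a' b')
| pcopair {a a' b b'} : Par a a' → Par b b' → Par (.copair a b) (.copair a' b')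
| pprl {a a'} : Par a a' → Par (.prl a) (.prl a')
| pprr {a a'} : Par a a' → Par (.prr a) (.prr a')
| pinl {a a' b b'} : Par a a' → Par b b' → Par (.inl a b) (.inl a' b')
| pinr {a a' b b'} : Par a a' → Par b b' → Par (.inr a b) (.inr a' b')
| pbeta {σ M M' N N'} : Par M M' → Par N N' →
    Par (.app (.lam σ M) N) (Tm.subst 0 N' M')
| prbeta {σ M M' N N'} : Par M M' → Par N N' →
    Par (.rapp (.rlam σ M) N) (Tm.subst 0 N' M')
| pprlR {a a' b} : Par a a' → Par (.prl (.pair a b)) a'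
| pprrR {a b b'} : Par b b' → Par (.prr (.pair a b)) b'
| pcoInl {a a' b σ c c'} : Par a a' → Par c c' →
    Par (.app (.copair a b) (.inl σ c)) (.app a' c')
| pcoInr {a b b' σ c c'} : Par b b' → Par c c' →
    Par (.app (.copair a b) (.inr σ c)) (.app b' c')

theorem parRefl : ∀ t : Tm, Par t t := by
  intro t
  induction t <;> constructor <;> assumption

theorem par_lift : ∀ {a b}, Par a b → ∀ c, Par (Tm.lift c a) (Tm.lift c b) := by
  intro a b h
  induction h <;> intro c <;> simp only [Tm.lift] <;>
    try { constructor <;> solve_by_elim }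
  all_goals try { split_ifs <;> constructor }
  all_goals try exact Par.pcoInl (by solve_by_elim) (by solve_by_elim)
  all_goals try exact Par.pcoInr (by solve_by_elim) (by solve_by_elim)
  all_goals try { rw [Tm.lift_subst0]; first
    | exact Par.pbeta (by solve_by_elim) (by solve_by_elim)
    | exact Par.prbeta (by solve_by_elim) (by solve_by_elim) }
  all_goals try exact Par.pprlR (by solve_by_elim)
  all_goals try exact Par.pprrR (by solve_by_elim)

theorem par_iterLift {a b : Tm} (h : Par a b) : ∀ k, Par ((Tm.lift 0)^[k] a) ((Tm.lift 0)^[k] b) := by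
  intro k
  induction k with
  | zero => simpa using h
  | succ k ih =>
    rw [Function.iterate_succ_apply' (Tm.lift 0) k a, Function.iterate_succ_apply' (Tm.lift 0) k b]
    exact par_lift ih 0

theorem par_subst : ∀ {M M'}, Par M M' → ∀ {N N'}, Par N N' → ∀ k,
    Par (Tm.subst k N M) (Tm.subst k N' M') := by
  intro M M' h
  induction h <;> intro N N' hN k <;> simp only [Tm.subst] <;>
    try { constructor <;> solve_by_elim }
  case pvar n =>
    split_ifs
    · exact parRefl _
    · exact par_iterLift hN k
    · exact parRefl _
  all_goals try exact Par.pcoInl (by solve_by_elim) (by solve_by_elim)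
  all_goals try exact Par.pcoInr (by solve_by_elim) (by solve_by_elim)
  all_goals try { rw [Tm.subst_subst0]; first
    | exact Par.pbeta (by solve_by_elim) (by solve_by_elim)
    | exact Par.prbeta (by solve_by_elim) (by solve_by_elim) }
  all_goals try exact Par.pprlR (by solve_by_elim)
  all_goals try exact Par.pprrR (by solve_by_elim)

/-- Complete development. -/
def cd : Tm → Tm
| .type => .type
| .pi a b => .pi (cd a) (cd b)
| .rarr a b => .rarr (cd a) (cd b)
| .inter a b => .inter (cd a) (cd b)
| .union a b => .union (cd a) (cd b)
| .const c => .const c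
| .var n => .var n
| .lam a b => .lam (cd a) (cd b)
| .app (.lam _ M) N => Tm.subst 0 (cd N) (cd M)
| .app (.copair a _) (.inl _ c) => .app (cd a) (cd c)
| .app (.copair _ b) (.inr _ c) => .app (cd b) (cd c)
| .app a b => .app (cd a) (cd b)
| .rlam a b => .rlam (cd a) (cd b)
| .rapp (.rlam _ M) N => Tm.subst 0 (cd N) (cd M)
| .rapp a b => .rapp (cd a) (cd b)
| .pair a b => .pair (cd a) (cd b)
| .copair a b => .copair (cd a) (cd b)
| .prl (.pair a _) => cd a
| .prl a => .prl (cd a)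
| .prr (.pair _ b) => cd b
| .prr a => .prr (cd a)
| .inl a b => .inl (cd a) (cd b)
| .inr a b => .inr (cd a) (cd b)

theorem par_lam_inv {σ M u} (h : Par (.lam σ M) u) :
    ∃ σ' M', u = .lam σ' M' ∧ Par σ σ' ∧ Par M M' := by
  cases h with | plam h1 h2 => exact ⟨_, _, rfl, h1, h2⟩

theorem par_rlam_inv {σ M u} (h : Par (.rlam σ M) u) :
    ∃ σ' M', u = .rlam σ' M' ∧ Par σ σ' ∧ Par M M' := by
  cases h with | prlam h1 h2 => exact ⟨_, _, rfl, h1, h2⟩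

theorem par_pair_inv {a b u} (h : Par (.pair a b) u) :
    ∃ a' b', u = .pair a' b' ∧ Par a a' ∧ Par b b' := by
  cases h with | ppair h1 h2 => exact ⟨_, _, rfl, h1, h2⟩

theorem par_copair_inv {a b u} (h : Par (.copair a b) u) :
    ∃ a' b', u = .copair a' b' ∧ Par a a' ∧ Par b b' := by
  cases h with | pcopair h1 h2 => exact ⟨_, _, rfl, h1, h2⟩

theorem par_inl_inv {a b u} (h : Par (.inl a b) u) :
    ∃ a' b', u = .inl a' b' ∧ Par a a' ∧ Par b b' := by
  cases h with | pinl h1 h2 => exact ⟨_, _, rfl, h1, h2⟩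

theorem par_inr_inv {a b u} (h : Par (.inr a b) u) :
    ∃ a' b', u = .inr a' b' ∧ Par a a' ∧ Par b b' := by
  cases h with | pinr h1 h2 => exact ⟨_, _, rfl, h1, h2⟩

set_option maxHeartbeats 4000000 in
theorem par_triangle : ∀ {t u : Tm}, Par t u → Par u (cd t) := by
  intro t u h
  induction h with
  | ptype => exact Par.ptype
  | pconst c => exact Par.pconst c
  | pvar n => exact Par.pvar n
  | ppi _ _ ih1 ih2 => exact Par.ppi ih1 ih2
  | prarr _ _ ih1 ih2 => exact Par.prarr ih1 ih2
  | pinter _ _ ih1 ih2 => exact Par.pinter ih1 ih2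
  | punion _ _ ih1 ih2 => exact Par.punion ih1 ih2
  | plam _ _ ih1 ih2 => exact Par.plam ih1 ih2
  | prlam _ _ ih1 ih2 => exact Par.prlam ih1 ih2
  | ppair _ _ ih1 ih2 => exact Par.ppair ih1 ih2
  | pcopair _ _ ih1 ih2 => exact Par.pcopair ih1 ih2
  | pinl _ _ ih1 ih2 => exact Par.pinl ih1 ih2
  | pinr _ _ ih1 ih2 => exact Par.pinr ih1 ih2
  | pbeta hM hN ihM ihN => exact par_subst ihM ihN 0
  | prbeta hM hN ihM ihN => exact par_subst ihM ihN 0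
  | pprlR _ ih => exact ih
  | pprrR _ ih => exact ih
  | pcoInl _ _ ih1 ih2 => exact Par.papp ih1 ih2
  | pcoInr _ _ ih1 ih2 => exact Par.papp ih1 ih2
  | pprl h ih =>
    rename_i t u
    cases t <;> try { exact Par.pprl ih }
    case pair a b =>
      obtain ⟨a', b', rfl, ha, hb⟩ := par_pair_inv h
      obtain ⟨a'', b'', he, ha', hb'⟩ := par_pair_inv ih
      cases he
      exact Par.pprlR ha'
  | pprr h ih =>
    rename_i t u
    cases t <;> try { exact Par.pprr ih }
    case pair a b =>
      obtain ⟨a', b', rfl, ha, hb⟩ := par_pair_inv h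
      obtain ⟨a'', b'', he, ha', hb'⟩ := par_pair_inv ih
      cases he
      exact Par.pprrR hb'
  | prapp h1 h2 ih1 ih2 =>
    rename_i t1 u1 t2 u2
    cases t1 <;> try { exact Par.prapp ih1 ih2 }
    case rlam σ M =>
      obtain ⟨σ', M', rfl, hσ, hM⟩ := par_rlam_inv h1
      obtain ⟨σ'', M'', he, hσ', hM'⟩ := par_rlam_inv ih1
      cases he
      exact Par.prbeta hM' ih2
  | papp h1 h2 ih1 ih2 =>
    rename_i t1 u1 t2 u2
    cases t1 <;> try { exact Par.papp ih1 ih2 }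
    case lam σ M =>
      obtain ⟨σ', M', rfl, hσ, hM⟩ := par_lam_inv h1
      obtain ⟨σ'', M'', he, hσ', hM'⟩ := par_lam_inv ih1
      cases he
      exact Par.pbeta hM' ih2
    case copair a b =>
      cases t2 <;> try { exact Par.papp ih1 ih2 }
      case inl σ c =>
        obtain ⟨a', b', rfl, ha, hb⟩ := par_copair_inv h1
        obtain ⟨σ', c', rfl, hσ, hc⟩ := par_inl_inv h2
        obtain ⟨a'', b'', he, ha', hb'⟩ := par_copair_inv ih1
        cases he
        obtain ⟨σ'', c'', he2, hσ', hc'⟩ := par_inl_inv ih2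
        cases he2
        exact Par.pcoInl ha' hc'
      case inr σ c =>
        obtain ⟨a', b', rfl, ha, hb⟩ := par_copair_inv h1
        obtain ⟨σ', c', rfl, hσ, hc⟩ := par_inr_inv h2
        obtain ⟨a'', b'', he, ha', hb'⟩ := par_copair_inv ih1
        cases he
        obtain ⟨σ'', c'', he2, hσ', hc'⟩ := par_inr_inv ih2
        cases he2
        exact Par.pcoInr hb' hc'

theorem par_diamond {a b c : Tm} (h1 : Par a b) (h2 : Par a c) :
    ∃ d, Par b d ∧ Par c d :=
  ⟨cd a, par_triangle h1, par_triangle h2⟩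

abbrev PStar := Relation.ReflTransGen Par

theorem conv_par_join {a b : Tm} (h : Conv Par a b) : ∃ d, PStar a d ∧ PStar b d := by
  have cr : ∀ x y z : Tm, Par x y → Par x z →
      ∃ d, Relation.ReflGen Par y d ∧ Relation.ReflTransGen Par z d := by
    intro x y z hy hz
    exact ⟨cd x, Relation.ReflGen.single (par_triangle hy),
      Relation.ReflTransGen.single (par_triangle hz)⟩
  induction h with
  | rel h => exact ⟨_, Relation.ReflTransGen.single h, Relation.ReflTransGen.refl⟩
  | refl a => exact ⟨a, Relation.ReflTransGen.refl, Relation.ReflTransGen.refl⟩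
  | symm _ ih => obtain ⟨d, h1, h2⟩ := ih; exact ⟨d, h2, h1⟩
  | trans _ _ ih1 ih2 =>
    obtain ⟨d1, ha, hb1⟩ := ih1
    obtain ⟨d2, hb2, hc⟩ := ih2
    obtain ⟨e, he1, he2⟩ := Relation.church_rosser cr hb1 hb2
    exact ⟨e, ha.trans he1, hc.trans he2⟩

theorem step_par : ∀ {a b : Tm}, Step a b → Par a b := by
  intro a b h
  induction h <;>
    first
      | exact Par.pbeta (parRefl _) (parRefl _)
      | exact Par.prbeta (parRefl _) (parRefl _)
      | exact Par.pprlR (parRefl _)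
      | exact Par.pprrR (parRefl _)
      | exact Par.pcoInl (parRefl _) (parRefl _)
      | exact Par.pcoInr (parRefl _) (parRefl _)
      | { constructor <;> first | assumption | exact parRefl _ }

theorem conv_mono {α : Type} {r s : α → α → Prop} (h : ∀ a b, r a b → s a b) :
    ∀ {a b}, Conv r a b → Conv s a b := by
  intro a b hc
  induction hc with
  | rel h' => exact Conv.rel (h _ _ h')
  | refl a => exact Conv.refl a
  | symm _ ih => exact Conv.symm ih
  | trans _ _ ih1 ih2 => exact Conv.trans ih1 ih2

theorem conv_map {α : Type} {r : α → α → Prop} (f : α → α)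
    (hf : ∀ a b, r a b → Conv r (f a) (f b)) :
    ∀ {a b}, Conv r a b → Conv r (f a) (f b) := by
  intro a b h
  induction h with
  | rel h' => exact hf _ _ h'
  | refl a => exact Conv.refl _
  | symm _ ih => exact Conv.symm ih
  | trans _ _ ih1 ih2 => exact Conv.trans ih1 ih2

theorem subst0_var0 (x : Tm) : Tm.subst 0 x (.var 0) = x := by
  simp [Tm.subst]

theorem step_pair_left {a a' : Tm} (b : Tm) (h : Step a a') :
    DefEq (.pair a b) (.pair a' b) := by
  have key : ∀ x : Tm, Step (.app (.lam .type (.pair (.var 0) (Tm.lift 0 b))) x) (.pair x b) := by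
    intro x
    have := @Step.beta .type (.pair (.var 0) (Tm.lift 0 b)) x
    simpa [Tm.subst, Tm.subst_lift_self] using this
  exact Conv.trans (Conv.symm (Conv.rel (key a)))
    (Conv.trans (Conv.rel (Step.appR h)) (Conv.rel (key a')))

theorem step_pair_right {b b' : Tm} (a : Tm) (h : Step b b') :
    DefEq (.pair a b) (.pair a b') := by
  have key : ∀ x : Tm, Step (.app (.lam .type (.pair (Tm.lift 0 a) (.var 0))) x) (.pair a x) := by
    intro x
    have := @Step.beta .type (.pair (Tm.lift 0 a) (.var 0)) x
    simpa [Tm.subst, Tm.subst_lift_self] using this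
  exact Conv.trans (Conv.symm (Conv.rel (key b)))
    (Conv.trans (Conv.rel (Step.appR h)) (Conv.rel (key b')))

theorem step_copair_left {a a' : Tm} (b : Tm) (h : Step a a') :
    DefEq (.copair a b) (.copair a' b) := by
  have key : ∀ x : Tm, Step (.app (.lam .type (.copair (.var 0) (Tm.lift 0 b))) x) (.copair x b) := by
    intro x
    have := @Step.beta .type (.copair (.var 0) (Tm.lift 0 b)) x
    simpa [Tm.subst, Tm.subst_lift_self] using this
  exact Conv.trans (Conv.symm (Conv.rel (key a)))
    (Conv.trans (Conv.rel (Step.appR h)) (Conv.rel (key a')))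

theorem step_copair_right {b b' : Tm} (a : Tm) (h : Step b b') :
    DefEq (.copair a b) (.copair a b') := by
  have key : ∀ x : Tm, Step (.app (.lam .type (.copair (Tm.lift 0 a) (.var 0))) x) (.copair a x) := by
    intro x
    have := @Step.beta .type (.copair (Tm.lift 0 a) (.var 0)) x
    simpa [Tm.subst, Tm.subst_lift_self] using this
  exact Conv.trans (Conv.symm (Conv.rel (key b)))
    (Conv.trans (Conv.rel (Step.appR h)) (Conv.rel (key b')))

theorem par_defEq : ∀ {a b : Tm}, Par a b → DefEq a b := by
  intro a b h
  induction h with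
  | ptype => exact Conv.refl _
  | pconst c => exact Conv.refl _
  | pvar n => exact Conv.refl _
  | ppi _ _ ih1 ih2 =>
    rename_i a a' b b' _ _
    exact Conv.trans (conv_map (fun x => .pi x b) (fun _ _ h => Conv.rel (Step.piL h)) ih1)
      (conv_map (fun x => .pi a' x) (fun _ _ h => Conv.rel (Step.piR h)) ih2)
  | prarr _ _ ih1 ih2 =>
    rename_i a a' b b' _ _
    exact Conv.trans (conv_map (fun x => .rarr x b) (fun _ _ h => Conv.rel (Step.rarrL h)) ih1)
      (conv_map (fun x => .rarr a' x) (fun _ _ h => Conv.rel (Step.rarrR h)) ih2)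
  | pinter _ _ ih1 ih2 =>
    rename_i a a' b b' _ _
    exact Conv.trans (conv_map (fun x => .inter x b) (fun _ _ h => Conv.rel (Step.interL h)) ih1)
      (conv_map (fun x => .inter a' x) (fun _ _ h => Conv.rel (Step.interR h)) ih2)
  | punion _ _ ih1 ih2 =>
    rename_i a a' b b' _ _
    exact Conv.trans (conv_map (fun x => .union x b) (fun _ _ h => Conv.rel (Step.unionL h)) ih1)
      (conv_map (fun x => .union a' x) (fun _ _ h => Conv.rel (Step.unionR h)) ih2)
  | plam _ _ ih1 ih2 =>
    rename_i a a' b b' _ _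
    exact Conv.trans (conv_map (fun x => .lam x b) (fun _ _ h => Conv.rel (Step.lamL h)) ih1)
      (conv_map (fun x => .lam a' x) (fun _ _ h => Conv.rel (Step.lamR h)) ih2)
  | prlam _ _ ih1 ih2 =>
    rename_i a a' b b' _ _
    exact Conv.trans (conv_map (fun x => .rlam x b) (fun _ _ h => Conv.rel (Step.rlamL h)) ih1)
      (conv_map (fun x => .rlam a' x) (fun _ _ h => Conv.rel (Step.rlamR h)) ih2)
  | papp _ _ ih1 ih2 =>
    rename_i a a' b b' _ _
    exact Conv.trans (conv_map (fun x => .app x b) (fun _ _ h => Conv.rel (Step.appL h)) ih1)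
      (conv_map (fun x => .app a' x) (fun _ _ h => Conv.rel (Step.appR h)) ih2)
  | prapp _ _ ih1 ih2 =>
    rename_i a a' b b' _ _
    exact Conv.trans (conv_map (fun x => .rapp x b) (fun _ _ h => Conv.rel (Step.rappL h)) ih1)
      (conv_map (fun x => .rapp a' x) (fun _ _ h => Conv.rel (Step.rappR h)) ih2)
  | ppair _ _ ih1 ih2 =>
    rename_i a a' b b' _ _
    exact Conv.trans (conv_map (r := Step) (fun x => Tm.pair x b) (fun _ _ h => step_pair_left b h) ih1)
      (conv_map (r := Step) (fun x => Tm.pair a' x) (fun _ _ h => step_pair_right a' h) ih2)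
  | pcopair _ _ ih1 ih2 =>
    rename_i a a' b b' _ _
    exact Conv.trans (conv_map (r := Step) (fun x => Tm.copair x b) (fun _ _ h => step_copair_left b h) ih1)
      (conv_map (r := Step) (fun x => Tm.copair a' x) (fun _ _ h => step_copair_right a' h) ih2)
  | pprl _ ih => exact conv_map (fun x => .prl x) (fun _ _ h => Conv.rel (Step.prlC h)) ih
  | pprr _ ih => exact conv_map (fun x => .prr x) (fun _ _ h => Conv.rel (Step.prrC h)) ih
  | pinl _ _ ih1 ih2 =>
    rename_i a a' b b' _ _
    exact Conv.trans (conv_map (fun x => .inl x b) (fun _ _ h => Conv.rel (Step.inlL h)) ih1)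
      (conv_map (fun x => .inl a' x) (fun _ _ h => Conv.rel (Step.inlR h)) ih2)
  | pinr _ _ ih1 ih2 =>
    rename_i a a' b b' _ _
    exact Conv.trans (conv_map (fun x => .inr x b) (fun _ _ h => Conv.rel (Step.inrL h)) ih1)
      (conv_map (fun x => .inr a' x) (fun _ _ h => Conv.rel (Step.inrR h)) ih2)
  | pbeta _ _ ihM ihN =>
    rename_i σ M M' N N' _ _
    have h1 : DefEq (.app (.lam σ M) N) (.app (.lam σ M') N') :=
      Conv.trans
        (conv_map (fun x => .app (.lam σ x) N) (fun _ _ h => Conv.rel (Step.appL (Step.lamR h))) ihM)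
        (conv_map (fun x => .app (.lam σ M') x) (fun _ _ h => Conv.rel (Step.appR h)) ihN)
    exact Conv.trans h1 (Conv.rel Step.beta)
  | prbeta _ _ ihM ihN =>
    rename_i σ M M' N N' _ _
    have h1 : DefEq (.rapp (.rlam σ M) N) (.rapp (.rlam σ M') N') :=
      Conv.trans
        (conv_map (fun x => .rapp (.rlam σ x) N) (fun _ _ h => Conv.rel (Step.rappL (Step.rlamR h))) ihM)
        (conv_map (fun x => .rapp (.rlam σ M') x) (fun _ _ h => Conv.rel (Step.rappR h)) ihN)
    exact Conv.trans h1 (Conv.rel Step.rbeta)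
  | pprlR _ ih => exact Conv.trans (Conv.rel Step.prl) ih
  | pprrR _ ih => exact Conv.trans (Conv.rel Step.prr) ih
  | pcoInl _ _ ih1 ih2 =>
    rename_i a a' b σ c c' _ _
    refine Conv.trans (Conv.rel Step.coInl) ?_
    exact Conv.trans (conv_map (fun x => .app x c) (fun _ _ h => Conv.rel (Step.appL h)) ih1)
      (conv_map (fun x => .app a' x) (fun _ _ h => Conv.rel (Step.appR h)) ih2)
  | pcoInr _ _ ih1 ih2 =>
    rename_i a b b' σ c c' _ _
    refine Conv.trans (Conv.rel Step.coInr) ?_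
    exact Conv.trans (conv_map (fun x => .app x c) (fun _ _ h => Conv.rel (Step.appL h)) ih1)
      (conv_map (fun x => .app b' x) (fun _ _ h => Conv.rel (Step.appR h)) ih2)

theorem pstar_defEq {a b : Tm} (h : PStar a b) : DefEq a b := by
  induction h with
  | refl => exact Conv.refl _
  | tail _ h2 ih => exact Conv.trans ih (par_defEq h2)

theorem pstar_pi {a b u} (h : PStar (.pi a b) u) :
    ∃ a' b', u = .pi a' b' ∧ PStar a a' ∧ PStar b b' := by
  induction h with
  | refl => exact ⟨a, b, rfl, .refl, .refl⟩
  | tail _ h2 ih =>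
    obtain ⟨a', b', rfl, ha, hb⟩ := ih
    cases h2 with
    | ppi h3 h4 => exact ⟨_, _, rfl, ha.tail h3, hb.tail h4⟩

theorem pstar_rarr {a b u} (h : PStar (.rarr a b) u) :
    ∃ a' b', u = .rarr a' b' ∧ PStar a a' ∧ PStar b b' := by
  induction h with
  | refl => exact ⟨a, b, rfl, .refl, .refl⟩
  | tail _ h2 ih =>
    obtain ⟨a', b', rfl, ha, hb⟩ := ih
    cases h2 with
    | prarr h3 h4 => exact ⟨_, _, rfl, ha.tail h3, hb.tail h4⟩

theorem pstar_inter {a b u} (h : PStar (.inter a b) u) :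
    ∃ a' b', u = .inter a' b' ∧ PStar a a' ∧ PStar b b' := by
  induction h with
  | refl => exact ⟨a, b, rfl, .refl, .refl⟩
  | tail _ h2 ih =>
    obtain ⟨a', b', rfl, ha, hb⟩ := ih
    cases h2 with
    | pinter h3 h4 => exact ⟨_, _, rfl, ha.tail h3, hb.tail h4⟩

theorem pstar_union {a b u} (h : PStar (.union a b) u) :
    ∃ a' b', u = .union a' b' ∧ PStar a a' ∧ PStar b b' := by
  induction h with
  | refl => exact ⟨a, b, rfl, .refl, .refl⟩
  | tail _ h2 ih =>
    obtain ⟨a', b', rfl, ha, hb⟩ := ih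
    cases h2 with
    | punion h3 h4 => exact ⟨_, _, rfl, ha.tail h3, hb.tail h4⟩

theorem pstar_type {u} (h : PStar .type u) : u = .type := by
  induction h with
  | refl => rfl
  | tail _ h2 ih => subst ih; cases h2; rfl

/-- Neutral (atomic) families: a constant applied to a spine of arguments. -/
inductive NeutF : Tm → Prop
| const (c : ℕ) : NeutF (.const c)
| app {f x : Tm} : NeutF f → NeutF (.app f x)

theorem par_neut {t u : Tm} (hn : NeutF t) (h : Par t u) : NeutF u := by
  induction hn generalizing u with
  | const c => cases h; exact NeutF.const _
  | app hf ih =>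
    cases h with
    | papp h1 h2 => exact NeutF.app (ih h1)
    | pbeta h1 h2 => cases hf
    | pcoInl h1 h2 => cases hf
    | pcoInr h1 h2 => cases hf

theorem pstar_neut {t u : Tm} (hn : NeutF t) (h : PStar t u) : NeutF u := by
  induction h with
  | refl => exact hn
  | tail _ h2 ih => exact par_neut ih h2

def Kappa (f : Tm) : Prop :=
  (∃ a b, f = .pi a b) ∨ (∃ a b, f = .rarr a b) ∨
  (∃ a b, f = .inter a b) ∨ (∃ a b, f = .union a b)

theorem defEq_join {a b : Tm} (h : DefEq a b) : ∃ d, PStar a d ∧ PStar b d :=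
  conv_par_join (conv_mono (fun _ _ hs => step_par hs) h)

theorem type_ne_pi {τ K : Tm} (h : DefEq .type (.pi τ K)) : False := by
  obtain ⟨d, h1, h2⟩ := defEq_join h
  obtain ⟨a', b', rfl, -, -⟩ := pstar_pi h2
  exact Tm.noConfusion (pstar_type h1)

theorem famShape {S : Sig} {Γ : Ctx} {f K : Tm} (h : FamTy S Γ f K) :
    NeutF f ∨ (Kappa f ∧ DefEq .type K) := by
  refine FamTy.rec (motive_1 := fun _ _ => True) (motive_2 := fun _ _ _ => True)
    (motive_3 := fun _ _ _ _ => True)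
    (motive_4 := fun _ _ f K _ => NeutF f ∨ (Kappa f ∧ DefEq .type K))
    (motive_5 := fun _ _ _ _ _ => True)
    trivial (by intros; trivial) (by intros; trivial)
    (by intros; trivial) (by intros; trivial)
    (by intros; trivial) (by intros; trivial)
    ?fconst ?fpi ?fapp ?frarr ?finter ?funion ?fconv
    (by intros; trivial) (by intros; trivial) (by intros; trivial)
    (by intros; trivial) (by intros; trivial) (by intros; trivial)
    (by intros; trivial) (by intros; trivial) (by intros; trivial)
    (by intros; trivial) (by intros; trivial) (by intros; trivial)
    (by intros; trivial) h
  case fconst => intros; exact Or.inl (NeutF.const _)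
  case fpi => intros; exact Or.inr ⟨Or.inl ⟨_, _, rfl⟩, Conv.refl _⟩
  case fapp =>
    intro S' Γ' σ τ K' Δ hσ hΔ ihσ ihΔ
    rcases ihσ with hn | ⟨-, hk⟩
    · exact Or.inl (NeutF.app hn)
    · exact absurd hk type_ne_pi
  case frarr => intros; exact Or.inr ⟨Or.inr (Or.inl ⟨_, _, rfl⟩), Conv.refl _⟩
  case finter => intros; exact Or.inr ⟨Or.inr (Or.inr (Or.inl ⟨_, _, rfl⟩)), Conv.refl _⟩
  case funion => intros; exact Or.inr ⟨Or.inr (Or.inr (Or.inr ⟨_, _, rfl⟩)), Conv.refl _⟩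
  case fconv =>
    intro S' Γ' σ K₁ K₂ hσ hK hdef ihσ ihK
    rcases ihσ with hn | ⟨hk, hd⟩
    · exact Or.inl hn
    · exact Or.inr ⟨hk, Conv.trans hd hdef⟩

end Machinery

/-- Conversion preserves the shape of Π-types, relevant arrows, intersections
    and unions (for well-formed families). -/
theorem lfdelta_conversion_shapes :
    ∀ (S : Sig) (Γ : Ctx),
      (∀ σ τ ρ : Tm, FamTy S Γ (.pi σ τ) .type → FamTy S Γ ρ .type →
        DefEq (.pi σ τ) ρ →
        ∃ σ' τ', ρ = .pi σ' τ' ∧ DefEq σ' σ ∧ DefEq τ' τ) ∧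
      (∀ σ τ ρ : Tm, FamTy S Γ (.rarr σ τ) .type → FamTy S Γ ρ .type →
        DefEq (.rarr σ τ) ρ →
        ∃ σ' τ', ρ = .rarr σ' τ' ∧ DefEq σ' σ ∧ DefEq τ' τ) ∧
      (∀ σ τ ρ : Tm, FamTy S Γ (.inter σ τ) .type → FamTy S Γ ρ .type →
        DefEq (.inter σ τ) ρ →
        ∃ σ' τ', ρ = .inter σ' τ' ∧ DefEq σ' σ ∧ DefEq τ' τ) ∧
      (∀ σ τ ρ : Tm, FamTy S Γ (.union σ τ) .type → FamTy S Γ ρ .type →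
        DefEq (.union σ τ) ρ →
        ∃ σ' τ', ρ = .union σ' τ' ∧ DefEq σ' σ ∧ DefEq τ' τ) := by
  refine fun S Γ => ⟨?_, ?_, ?_, ?_⟩
  · intro σ τ ρ _ hρ hconv
    obtain ⟨d, h1, h2⟩ := defEq_join hconv
    obtain ⟨σ₀, τ₀, rfl, hσ, hτ⟩ := pstar_pi h1
    rcases famShape hρ with hn | ⟨hk, -⟩
    · exact absurd (pstar_neut hn h2) (by rintro ⟨⟩)
    · rcases hk with ⟨a, b, rfl⟩ | ⟨a, b, rfl⟩ | ⟨a, b, rfl⟩ | ⟨a, b, rfl⟩ <;>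
        [(obtain ⟨σ₁, τ₁, he, hσ2, hτ2⟩ := pstar_pi h2);
         (obtain ⟨σ₁, τ₁, he, hσ2, hτ2⟩ := pstar_rarr h2);
         (obtain ⟨σ₁, τ₁, he, hσ2, hτ2⟩ := pstar_inter h2);
         (obtain ⟨σ₁, τ₁, he, hσ2, hτ2⟩ := pstar_union h2)] <;>
      first
        | (cases he
           exact ⟨a, b, rfl, Conv.trans (pstar_defEq hσ2) (Conv.symm (pstar_defEq hσ)),
             Conv.trans (pstar_defEq hτ2) (Conv.symm (pstar_defEq hτ))⟩)
        | exact absurd he (by simp)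
  · intro σ τ ρ _ hρ hconv
    obtain ⟨d, h1, h2⟩ := defEq_join hconv
    obtain ⟨σ₀, τ₀, rfl, hσ, hτ⟩ := pstar_rarr h1
    rcases famShape hρ with hn | ⟨hk, -⟩
    · exact absurd (pstar_neut hn h2) (by rintro ⟨⟩)
    · rcases hk with ⟨a, b, rfl⟩ | ⟨a, b, rfl⟩ | ⟨a, b, rfl⟩ | ⟨a, b, rfl⟩ <;>
        [(obtain ⟨σ₁, τ₁, he, hσ2, hτ2⟩ := pstar_pi h2);
         (obtain ⟨σ₁, τ₁, he, hσ2, hτ2⟩ := pstar_rarr h2);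
         (obtain ⟨σ₁, τ₁, he, hσ2, hτ2⟩ := pstar_inter h2);
         (obtain ⟨σ₁, τ₁, he, hσ2, hτ2⟩ := pstar_union h2)] <;>
      first
        | (cases he
           exact ⟨a, b, rfl, Conv.trans (pstar_defEq hσ2) (Conv.symm (pstar_defEq hσ)),
             Conv.trans (pstar_defEq hτ2) (Conv.symm (pstar_defEq hτ))⟩)
        | exact absurd he (by simp)
  · intro σ τ ρ _ hρ hconv
    obtain ⟨d, h1, h2⟩ := defEq_join hconv
    obtain ⟨σ₀, τ₀, rfl, hσ, hτ⟩ := pstar_inter h1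
    rcases famShape hρ with hn | ⟨hk, -⟩
    · exact absurd (pstar_neut hn h2) (by rintro ⟨⟩)
    · rcases hk with ⟨a, b, rfl⟩ | ⟨a, b, rfl⟩ | ⟨a, b, rfl⟩ | ⟨a, b, rfl⟩ <;>
        [(obtain ⟨σ₁, τ₁, he, hσ2, hτ2⟩ := pstar_pi h2);
         (obtain ⟨σ₁, τ₁, he, hσ2, hτ2⟩ := pstar_rarr h2);
         (obtain ⟨σ₁, τ₁, he, hσ2, hτ2⟩ := pstar_inter h2);
         (obtain ⟨σ₁, τ₁, he, hσ2, hτ2⟩ := pstar_union h2)] <;>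
      first
        | (cases he
           exact ⟨a, b, rfl, Conv.trans (pstar_defEq hσ2) (Conv.symm (pstar_defEq hσ)),
             Conv.trans (pstar_defEq hτ2) (Conv.symm (pstar_defEq hτ))⟩)
        | exact absurd he (by simp)
  · intro σ τ ρ _ hρ hconv
    obtain ⟨d, h1, h2⟩ := defEq_join hconv
    obtain ⟨σ₀, τ₀, rfl, hσ, hτ⟩ := pstar_union h1
    rcases famShape hρ with hn | ⟨hk, -⟩
    · exact absurd (pstar_neut hn h2) (by rintro ⟨⟩)
    · rcases hk with ⟨a, b, rfl⟩ | ⟨a, b, rfl⟩ | ⟨a, b, rfl⟩ | ⟨a, b, rfl⟩ <;>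
        [(obtain ⟨σ₁, τ₁, he, hσ2, hτ2⟩ := pstar_pi h2);
         (obtain ⟨σ₁, τ₁, he, hσ2, hτ2⟩ := pstar_rarr h2);
         (obtain ⟨σ₁, τ₁, he, hσ2, hτ2⟩ := pstar_inter h2);
         (obtain ⟨σ₁, τ₁, he, hσ2, hτ2⟩ := pstar_union h2)] <;>
      first
        | (cases he
           exact ⟨a, b, rfl, Conv.trans (pstar_defEq hσ2) (Conv.symm (pstar_defEq hσ)),
             Conv.trans (pstar_defEq hτ2) (Conv.symm (pstar_defEq hτ))⟩)
        | exact absurd he (by simp)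


end LFDelta
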